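/- Let n ≥ 2 and λ ∈ ℝ^n with λ_1 ≥ ... ≥ λ_n, λ_i > 0 for 1 ≤ i ≤ n-1, λ_n < 0, σ_{n-1}(λ) ≥ 0 and σ_n(λ) < 0. Then for any real numbers a_1, ..., a_{n-1}, setting a_n = -(a_1 + ... + a_{n-1}), one has Σ_{i=1}^{n-1} λ_i |a_i|² + λ_n |Σ_{i=1}^{n-1} a_i|² ≥ 0. -/

import Mathlib

open Real Finset

/-- The `k`-th elementary symmetric polynomial of `x : Fin n → ℝ`. -/
def esymm (n k : ℕ) (x : Fin n → ℝ) : ℝ :=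
  ∑ s ∈ (Finset.univ : Finset (Fin n)).powersetCard k, ∏ i ∈ s, x i

theorem stmt_4 (n : ℕ) (hn : 2 ≤ n) (lam : Fin n → ℝ)
    (hord : ∀ i j : Fin n, i ≤ j → lam j ≤ lam i)
    (hpos : ∀ i : Fin n, (i : ℕ) < n - 1 → 0 < lam i)
    (hneg : lam ⟨n - 1, by omega⟩ < 0)
    (hσn1 : 0 ≤ esymm n (n - 1) lam)
    (hσn : esymm n n lam < 0)
    (a : Fin n → ℝ)
    (ha : a ⟨n - 1, by omega⟩ =
      -∑ i ∈ Finset.univ.filter (fun i : Fin n => (i : ℕ) < n - 1), a i) :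
    0 ≤ (∑ i ∈ Finset.univ.filter (fun i : Fin n => (i : ℕ) < n - 1), lam i * (a i) ^ 2)
        + lam ⟨n - 1, by omega⟩ *
          (∑ i ∈ Finset.univ.filter (fun i : Fin n => (i : ℕ) < n - 1), a i) ^ 2 := by
  have hn1 : n - 1 < n := by omega
  set ℓ : Fin n := ⟨n - 1, hn1⟩ with hℓ
  set S : Finset (Fin n) := Finset.univ.filter (fun i : Fin n => (i : ℕ) < n - 1) with hS
  have hmemS : ∀ i : Fin n, i ∈ S ↔ (i : ℕ) < n - 1 := by
    intro i; simp [hS]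
  have hℓS : ℓ ∉ S := by simp [hmemS, hℓ]
  have hcover : ∀ i : Fin n, i ∈ S ∨ i = ℓ := by
    intro i
    rcases lt_or_ge (i : ℕ) (n - 1) with h | h
    · exact Or.inl ((hmemS i).2 h)
    · right; apply Fin.ext; have := i.isLt; simp [hℓ]; omega
  have hne : ∀ i : Fin n, lam i ≠ 0 := by
    intro i
    rcases hcover i with h | h
    · exact ne_of_gt (hpos i ((hmemS i).1 h))
    · rw [h]; exact ne_of_lt hneg
  -- esymm n n = product
  have hcard : (Finset.univ : Finset (Fin n)).card = n := by simp
  have hpcs : (Finset.univ : Finset (Fin n)).powersetCard n = {Finset.univ} := by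
    have h := Finset.powersetCard_self (Finset.univ : Finset (Fin n))
    rwa [hcard] at h
  have hprodn : esymm n n lam = ∏ i, lam i := by
    unfold esymm
    rw [hpcs]
    simp
  -- esymm (n-1) as sum over erase
  have herase : ∀ j : Fin n, ∏ i ∈ Finset.univ.erase j, lam i = (∏ i, lam i) / lam j := by
    intro j
    rw [eq_div_iff (hne j), Finset.prod_erase_mul _ _ (Finset.mem_univ j)]
  have hinj : ∀ x ∈ (Finset.univ : Finset (Fin n)), ∀ y ∈ (Finset.univ : Finset (Fin n)),
      Finset.univ.erase x = Finset.univ.erase y → x = y := by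
    intro x _ y _ h
    by_contra hxy
    have hx : x ∈ Finset.univ.erase y := Finset.mem_erase.2 ⟨hxy, Finset.mem_univ x⟩
    rw [← h] at hx
    exact (Finset.mem_erase.1 hx).1 rfl
  have himg : (Finset.univ : Finset (Fin n)).powersetCard (n - 1)
      = Finset.univ.image (fun j : Fin n => Finset.univ.erase j) := by
    ext s
    simp only [Finset.mem_powersetCard, Finset.mem_image, Finset.mem_univ, true_and]
    constructor
    · rintro ⟨hsub, hcardS⟩
      have hcs : (Finset.univ \ s).card = 1 := by
        rw [Finset.card_sdiff_of_subset hsub, hcard, hcardS]; omega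
      obtain ⟨x, hx⟩ := Finset.card_eq_one.1 hcs
      refine ⟨x, ?_⟩
      refine (Finset.eq_of_subset_of_card_le ?_ ?_).symm
      · intro i hi
        refine Finset.mem_erase.2 ⟨?_, Finset.mem_univ i⟩
        rintro rfl
        have hxmem : i ∈ Finset.univ \ s := hx ▸ Finset.mem_singleton_self i
        exact (Finset.mem_sdiff.1 hxmem).2 hi
      · rw [Finset.card_erase_of_mem (Finset.mem_univ x), hcard, hcardS]
    · rintro ⟨j, rfl⟩
      exact ⟨Finset.erase_subset _ _, by
        rw [Finset.card_erase_of_mem (Finset.mem_univ j), hcard]⟩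
  have hesym1 : esymm n (n - 1) lam = (∏ i, lam i) * ∑ j : Fin n, (lam j)⁻¹ := by
    unfold esymm
    rw [himg, Finset.sum_image hinj, Finset.mul_sum]
    apply Finset.sum_congr rfl
    intro j _
    rw [herase j, div_eq_mul_inv]
  -- Sum of inverses is ≤ 0
  have hprodneg : (∏ i, lam i) < 0 := hprodn ▸ hσn
  have hsuminv : (∑ j : Fin n, (lam j)⁻¹) ≤ 0 := by
    by_contra h
    push_neg at h
    have := mul_neg_of_neg_of_pos hprodneg h
    rw [← hesym1] at this
    exact absurd hσn1 (not_le.2 this)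
  -- split the sum
  have hsplit : (∑ j : Fin n, (lam j)⁻¹) = (∑ i ∈ S, (lam i)⁻¹) + (lam ℓ)⁻¹ := by
    rw [← Finset.sum_erase_add _ _ (Finset.mem_univ ℓ)]
    congr 1
    apply Finset.sum_congr _ (fun _ _ => rfl)
    ext i
    simp only [Finset.mem_erase, Finset.mem_univ, and_true, hmemS]
    constructor
    · intro h
      rcases hcover i with h' | h'
      · exact (hmemS i).1 h'
      · exact absurd h' h
    · intro h
      rintro rfl
      simp [hℓ] at h
  set T : ℝ := ∑ i ∈ S, (lam i)⁻¹ with hT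
  have hkey : 0 ≤ 1 + lam ℓ * T := by
    have hTle : T ≤ -(lam ℓ)⁻¹ := by
      have := hsplit ▸ hsuminv
      linarith
    have := mul_le_mul_of_nonpos_left hTle (le_of_lt hneg)
    rw [mul_neg, mul_inv_cancel₀ (ne_of_lt hneg)] at this
    linarith
  -- Cauchy-Schwarz
  set Q : ℝ := ∑ i ∈ S, lam i * (a i) ^ 2 with hQ
  have hQnn : 0 ≤ Q := Finset.sum_nonneg fun i hi =>
    mul_nonneg (le_of_lt (hpos i ((hmemS i).1 hi))) (sq_nonneg _)
  have hTnn : 0 ≤ T := Finset.sum_nonneg fun i hi =>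
    le_of_lt (inv_pos.2 (hpos i ((hmemS i).1 hi)))
  have hCS : (∑ i ∈ S, a i) ^ 2 ≤ Q * T := by
    have h := Finset.sum_mul_sq_le_sq_mul_sq S
      (fun i => Real.sqrt (lam i) * a i) (fun i => (Real.sqrt (lam i))⁻¹)
    have e1 : (∑ i ∈ S, (Real.sqrt (lam i) * a i) * (Real.sqrt (lam i))⁻¹)
        = ∑ i ∈ S, a i := by
      apply Finset.sum_congr rfl
      intro i hi
      have hp := hpos i ((hmemS i).1 hi)
      have : Real.sqrt (lam i) ≠ 0 := ne_of_gt (Real.sqrt_pos.2 hp)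
      field_simp
    have e2 : (∑ i ∈ S, (Real.sqrt (lam i) * a i) ^ 2) = Q := by
      apply Finset.sum_congr rfl
      intro i hi
      have hp := hpos i ((hmemS i).1 hi)
      rw [mul_pow, Real.sq_sqrt (le_of_lt hp)]
    have e3 : (∑ i ∈ S, ((Real.sqrt (lam i))⁻¹) ^ 2) = T := by
      apply Finset.sum_congr rfl
      intro i hi
      have hp := hpos i ((hmemS i).1 hi)
      rw [inv_pow, Real.sq_sqrt (le_of_lt hp)]
    rw [e1, e2, e3] at h
    exact h
  have hfinal : lam ℓ * (∑ i ∈ S, a i) ^ 2 ≥ lam ℓ * (Q * T) :=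
    mul_le_mul_of_nonpos_left hCS (le_of_lt hneg)
  have : Q + lam ℓ * (Q * T) = Q * (1 + lam ℓ * T) := by ring
  nlinarith [mul_nonneg hQnn hkey]
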